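/- For every x > 0, log x − ψ(x) − 1/(2x) ≤ 1/(12x²), where ψ is the digamma function. -/

import Mathlib

open Set Filter Topology Real

/-- The digamma function `ψ(x) = d/dx log Γ(x)`. -/
noncomputable def digamma (x : ℝ) : ℝ := deriv (fun y => Real.log (Real.Gamma y)) x

private lemma lgamma_comp : (Real.log ∘ Real.Gamma) = fun y => Real.log (Real.Gamma y) := rfl

private lemma diff_lgamma {x : ℝ} (hx : 0 < x) :
    DifferentiableAt ℝ (fun y => Real.log (Real.Gamma y)) x := by
  refine (Real.differentiableAt_Gamma ?_).log (Real.Gamma_ne_zero ?_) <;>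
    exact fun m => ne_of_gt (by have := Nat.cast_nonneg (α := ℝ) m; linarith)

private lemma lgamma_rec {x : ℝ} (hx : 0 < x) :
    Real.log (Real.Gamma (x + 1)) = Real.log (Real.Gamma x) + Real.log x := by
  rw [Real.Gamma_add_one hx.ne', Real.log_mul hx.ne' (Real.Gamma_pos_of_pos hx).ne', add_comm]

private lemma digamma_rec {x : ℝ} (hx : 0 < x) : digamma (x + 1) = digamma x + 1 / x := by
  unfold digamma
  rw [← deriv_comp_add_const, one_div, ← Real.deriv_log,
    ← deriv_add (diff_lgamma hx) (Real.differentiableAt_log hx.ne')]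
  apply Filter.EventuallyEq.deriv_eq
  filter_upwards [eventually_gt_nhds hx] with y hy using lgamma_rec hy

private lemma digamma_le_log {x : ℝ} (hx : 0 < x) : digamma x ≤ Real.log x := by
  have hc := Real.convexOn_log_Gamma
  have h := hc.deriv_le_slope (mem_Ioi.mpr hx) (mem_Ioi.mpr (by linarith : (0:ℝ) < x + 1))
    (by linarith) (by rw [lgamma_comp]; exact diff_lgamma hx)
  rw [lgamma_comp] at h
  refine h.trans (le_of_eq ?_)
  rw [slope_def_field, show x + 1 - x = (1:ℝ) by ring, div_one, lgamma_rec hx,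
    add_sub_cancel_left]

private lemma log_le_digamma {x : ℝ} (hx : 1 < x) : Real.log (x - 1) ≤ digamma x := by
  have hx0 : (0:ℝ) < x - 1 := by linarith
  have hc := Real.convexOn_log_Gamma
  have h := hc.slope_le_deriv (mem_Ioi.mpr hx0) (mem_Ioi.mpr (by linarith : (0:ℝ) < x))
    (by linarith) (by rw [lgamma_comp]; exact diff_lgamma (by linarith))
  rw [lgamma_comp] at h
  refine le_trans (le_of_eq ?_) h
  rw [slope_def_field, show x - (x - 1) = (1:ℝ) by ring, div_one,
    show x = (x - 1) + 1 by ring, lgamma_rec hx0]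
  ring_nf

/-- Padé-type lower bound for `log (1+u)`. -/
private lemma pade_log {u : ℝ} (hu : 0 ≤ u) :
    (6 * u + 3 * u ^ 2) / (6 + 6 * u + u ^ 2) ≤ Real.log (1 + u) := by
  set F : ℝ → ℝ := fun y => Real.log (1 + y) - (6 * y + 3 * y ^ 2) / (6 + 6 * y + y ^ 2) with hF
  have hder : ∀ y : ℝ, 0 ≤ y → HasDerivAt F
      (1 / (1 + y) - ((6 + 6 * y) * (6 + 6 * y + y ^ 2) - (6 * y + 3 * y ^ 2) * (6 + 2 * y)) /
        (6 + 6 * y + y ^ 2) ^ 2) y := by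
    intro y hy
    have h1 : HasDerivAt (fun z : ℝ => Real.log (1 + z)) (1 / (1 + y)) y := by
      have := ((hasDerivAt_id y).const_add 1).log (by positivity : (1:ℝ) + y ≠ 0)
      simpa using this
    have hN : HasDerivAt (fun z : ℝ => 6 * z + 3 * z ^ 2) (6 + 6 * y) y := by
      have h := ((hasDerivAt_id y).const_mul (6:ℝ)).add ((hasDerivAt_pow 2 y).const_mul (3:ℝ))
      convert h using 1 <;> first | rfl | (funext z; simp [id]) | (norm_num; try ring) | (simp; try ring)
    have hD : HasDerivAt (fun z : ℝ => 6 + 6 * z + z ^ 2) (6 + 2 * y) y := by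
      have h := (((hasDerivAt_id y).const_mul (6:ℝ)).const_add (6:ℝ)).add (hasDerivAt_pow 2 y)
      convert h using 1 <;> first | rfl | (funext z; simp [id]) | (norm_num; try ring) | (simp; try ring)
    exact h1.sub (hN.div hD (by positivity))
  have hmono : MonotoneOn F (Ici 0) := by
    refine monotoneOn_of_deriv_nonneg (convex_Ici 0) ?_ ?_ ?_
    · intro y hy
      exact ((hder y hy).differentiableAt).continuousAt.continuousWithinAt
    · intro y hy
      rw [interior_Ici] at hy
      exact ((hder y (le_of_lt hy)).differentiableAt).differentiableWithinAt
    · intro y hy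
      rw [interior_Ici] at hy
      have hy' : 0 < y := hy
      rw [(hder y hy'.le).deriv]
      have hd : (0:ℝ) < 6 + 6 * y + y ^ 2 := by positivity
      have h1y : (0:ℝ) < 1 + y := by linarith [hy']
      have key : 1 / (1 + y) - ((6 + 6 * y) * (6 + 6 * y + y ^ 2) -
          (6 * y + 3 * y ^ 2) * (6 + 2 * y)) / (6 + 6 * y + y ^ 2) ^ 2
          = y ^ 4 / ((1 + y) * (6 + 6 * y + y ^ 2) ^ 2) := by
        field_simp
        ring
      rw [key]
      positivity
  have h0 : F 0 ≤ F u := hmono (self_mem_Ici) (mem_Ici.mpr hu) hu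
  have : F 0 = 0 := by simp [hF]
  rw [this] at h0
  simpa [hF, sub_nonneg] using h0

/-- The auxiliary function whose nonnegativity is the statement. -/
private noncomputable def faux (x : ℝ) : ℝ :=
  digamma x - Real.log x + 1 / (2 * x) + 1 / (12 * x ^ 2)

private lemma faux_step {x : ℝ} (hx : 0 < x) : faux (x + 1) ≤ faux x := by
  unfold faux
  rw [digamma_rec hx]
  have hx1 : (0:ℝ) < x + 1 := by linarith
  have hlog : (6 * x + 3) / (6 * x ^ 2 + 6 * x + 1) ≤ Real.log (x + 1) - Real.log x := by
    have h := pade_log (u := 1 / x) (by positivity)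
    have heq : (6 * (1/x) + 3 * (1/x) ^ 2) / (6 + 6 * (1/x) + (1/x) ^ 2)
        = (6 * x + 3) / (6 * x ^ 2 + 6 * x + 1) := by
      field_simp
      try ring
    have heq2 : Real.log (1 + 1 / x) = Real.log (x + 1) - Real.log x := by
      rw [show (1:ℝ) + 1 / x = (x + 1) / x by field_simp,
        Real.log_div (by positivity) hx.ne']
    rw [heq, heq2] at h
    exact h
  have hkey : (6 * x + 3) / (6 * x ^ 2 + 6 * x + 1) -
      (1 / x + 1 / (2 * (x + 1)) + 1 / (12 * (x + 1) ^ 2) - 1 / (2 * x) - 1 / (12 * x ^ 2))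
      = (2 * x + 1) / (12 * x ^ 2 * (x + 1) ^ 2 * (6 * x ^ 2 + 6 * x + 1)) := by
    field_simp
    ring
  have hpos : (0:ℝ) < (2 * x + 1) / (12 * x ^ 2 * (x + 1) ^ 2 * (6 * x ^ 2 + 6 * x + 1)) := by
    positivity
  linarith [hkey, hlog, hpos]

private lemma faux_iter {x : ℝ} (hx : 0 < x) : ∀ n : ℕ, faux (x + n) ≤ faux x := by
  intro n
  induction n with
  | zero => simp
  | succ n ih =>
    have h : faux (x + n + 1) ≤ faux (x + n) := faux_step (by positivity)
    push_cast
    calc faux (x + (n + 1)) = faux (x + n + 1) := by ring_nf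
    _ ≤ faux (x + n) := h
    _ ≤ faux x := ih

private lemma faux_lower {x : ℝ} (hx : 0 < x) (n : ℕ) : -(1 / (x + n)) ≤ faux x := by
  refine le_trans ?_ (faux_iter hx (n + 1))
  have hy : (1:ℝ) < x + (n + 1 : ℕ) := by push_cast; linarith [Nat.cast_nonneg (α := ℝ) n]
  have hy0 : (0:ℝ) < x + (n + 1 : ℕ) := by linarith
  have hlb := log_le_digamma hy
  have hxn : x + (n + 1 : ℕ) - 1 = x + n := by push_cast; ring
  rw [hxn] at hlb
  have hxn0 : (0:ℝ) < x + n := by positivity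
  -- log (x+n) - log (x+n+1) ≥ -(1/(x+n))
  have hlog : Real.log (x + (n + 1 : ℕ)) - Real.log (x + n) ≤ 1 / (x + n) := by
    rw [← Real.log_div hy0.ne' hxn0.ne']
    have := Real.log_le_sub_one_of_pos (x := (x + (n + 1 : ℕ)) / (x + n)) (by positivity)
    have heq : (x + (n + 1 : ℕ)) / (x + n) - 1 = 1 / (x + n) := by
      push_cast
      field_simp
      try ring
    linarith [heq ▸ this]
  have hpos1 : (0:ℝ) < 1 / (2 * (x + (n + 1 : ℕ))) := by positivity
  have hpos2 : (0:ℝ) < 1 / (12 * (x + (n + 1 : ℕ)) ^ 2) := by positivity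
  unfold faux
  linarith

private lemma faux_nonneg {x : ℝ} (hx : 0 < x) : 0 ≤ faux x := by
  have htend : Tendsto (fun n : ℕ => -(1 / (x + n))) atTop (𝓝 0) := by
    have h1 : Tendsto (fun n : ℕ => x + (n : ℝ)) atTop atTop :=
      tendsto_atTop_add_const_left _ _ tendsto_natCast_atTop_atTop
    have h2 : Tendsto (fun n : ℕ => 1 / (x + (n : ℝ))) atTop (𝓝 0) := by
      simpa [one_div, Pi.inv_def] using h1.inv_tendsto_atTop
    simpa using h2.neg
  exact le_of_tendsto' htend (fun n => faux_lower hx n)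

theorem stmt3 :
    ∀ x : ℝ, 0 < x →
      Real.log x - digamma x - 1 / (2 * x) ≤ 1 / (12 * x ^ 2) := by
  intro x hx
  have h := faux_nonneg hx
  unfold faux at h
  linarith
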